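/- Let P be a finite extraspecial p-group (that is, the centre Z(P) has order p and P/Z(P) is a nontrivial elementary abelian p-group), and let φ be an automorphism of P whose order is coprime to |P| and whose fixed-point subgroup C_P(φ) equals the Frattini subgroup Φ(P). Then every element g ∈ P \ Φ(P) is conjugate in P to an element of the form [x,φ] = x⁻¹·φ(x) for some x ∈ P. -/

import Mathlib

lemma aux_center_le_zpowers {p : ℕ} {P : Type*} [Group P] [Finite P]
    (hp : p.Prime) (hcenter : Nat.card (Subgroup.center P) = p)
    {w : P} (hw : w ∈ Subgroup.center P) (hw1 : w ≠ 1) :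
    Subgroup.center P ≤ Subgroup.zpowers w := by
  set Z := Subgroup.center P
  set w' : Z := ⟨w, hw⟩
  have hw1' : w' ≠ 1 := by simpa [w'] using hw1
  have hdvd : orderOf w' ∣ p := hcenter ▸ orderOf_dvd_natCard w'
  have hord : orderOf w' = p :=
    ((Nat.Prime.eq_one_or_self_of_dvd hp _ hdvd).resolve_left
      (by simpa [orderOf_eq_one_iff] using hw1'))
  have htop : Subgroup.zpowers w' = ⊤ := by
    apply Subgroup.eq_top_of_card_eq
    rw [Nat.card_zpowers, hord, hcenter]
  intro u hu
  have : (⟨u, hu⟩ : Z) ∈ Subgroup.zpowers w' := htop ▸ Subgroup.mem_top _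
  obtain ⟨k, hk⟩ := this
  exact ⟨k, by simpa [w'] using congrArg (Subtype.val) hk⟩

lemma aux_center_le_coatom {p : ℕ} {P : Type*} [Group P] [Finite P]
    (hp : p.Prime) (hcenter : Nat.card (Subgroup.center P) = p)
    (hnontriv : Subgroup.center P ≠ ⊤)
    (habelian : ∀ x y : P, x * y * x⁻¹ * y⁻¹ ∈ Subgroup.center P)
    {M : Subgroup P} (hM : IsCoatom M) : Subgroup.center P ≤ M := by
  by_contra hle
  obtain ⟨z, hz, hzM⟩ := SetLike.not_le_iff_exists.mp hle
  -- M ⊔ center = ⊤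
  have hlt : M < M ⊔ Subgroup.center P := by
    refine lt_of_le_of_ne le_sup_left ?_
    intro h
    exact hzM (h ▸ Subgroup.mem_sup_right hz)
  have hsup : M ⊔ Subgroup.center P = ⊤ := hM.2 _ hlt
  -- M is normal
  have hnorm : M.Normal := by
    rw [← Subgroup.normalizer_eq_top_iff]
    rw [eq_top_iff, ← hsup]
    exact sup_le Subgroup.le_normalizer (Subgroup.center_le_normalizer _)
  -- every element of P/M is the image of a central element
  have hQsurj : ∀ q : P ⧸ M, ∃ c ∈ Subgroup.center P, (c : P ⧸ M) = q := by
    intro q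
    have : Subgroup.map (QuotientGroup.mk' M) (M ⊔ Subgroup.center P) = ⊤ := by
      rw [hsup]
      exact Subgroup.map_top_of_surjective _ (QuotientGroup.mk'_surjective M)
    rw [Subgroup.map_sup] at this
    have hMbot : Subgroup.map (QuotientGroup.mk' M) M = ⊥ := by
      rw [eq_bot_iff]
      rintro _ ⟨m, hm, rfl⟩
      simpa [QuotientGroup.eq_one_iff] using hm
    rw [hMbot, bot_sup_eq] at this
    have : q ∈ Subgroup.map (QuotientGroup.mk' M) (Subgroup.center P) :=
      this ▸ Subgroup.mem_top q
    obtain ⟨c, hc, hcq⟩ := this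
    exact ⟨c, hc, hcq⟩
  -- P/M is commutative
  have hcomm : ∀ a b : P ⧸ M, a * b = b * a := by
    intro a b
    obtain ⟨c, hc, rfl⟩ := hQsurj a
    obtain ⟨d, hd, rfl⟩ := hQsurj b
    have : c * d = d * c := (Subgroup.mem_center_iff.mp hc d).symm
    rw [← QuotientGroup.mk_mul, ← QuotientGroup.mk_mul, this]
  -- hence all commutators lie in M
  have hcommM : ∀ x y : P, x * y * x⁻¹ * y⁻¹ ∈ M := by
    intro x y
    rw [← QuotientGroup.eq_one_iff]
    have h := hcomm (x : P ⧸ M) (y : P ⧸ M)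
    show ((x*y*x⁻¹*y⁻¹ : P) : P ⧸ M) = 1
    rw [QuotientGroup.mk_mul, QuotientGroup.mk_mul, QuotientGroup.mk_mul,
      QuotientGroup.mk_inv, QuotientGroup.mk_inv, h]
    group
  -- all commutators are trivial
  have htriv : ∀ x y : P, x * y * x⁻¹ * y⁻¹ = 1 := by
    intro x y
    by_contra hne
    have hmem := hcommM x y
    have hmemZ := habelian x y
    have := aux_center_le_zpowers hp hcenter hmemZ hne hz
    obtain ⟨k, hk⟩ := this
    exact hzM (hk ▸ Subgroup.zpow_mem M hmem k)
  -- so P is abelian, contradicting center ≠ ⊤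
  apply hnontriv
  rw [eq_top_iff]
  intro x _
  rw [Subgroup.mem_center_iff]
  intro y
  have := htriv x y
  have : x * y = y * x := by
    have h := htriv x y
    calc x * y = (x * y * x⁻¹ * y⁻¹) * (y * x) := by group
    _ = y * x := by rw [h]; group
  exact this.symm


/-- The `ZMod p` module structure on (the additive version of) a commutative group
of exponent dividing `p`. -/
def auxModule (p : ℕ) (Q : Type*) [CommGroup Q] (h : ∀ q : Q, q ^ p = 1) :
    Module (ZMod p) (Additive Q) :=
  AddCommGroup.zmodModule (by
    intro x
    show p • x = 0
    rw [← ofMul_toMul x, ← ofMul_pow, h]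
    rfl)

/-- In a finite elementary abelian p-group, every non-identity element is avoided by
some maximal subgroup. -/
lemma aux_exists_coatom_avoiding {p : ℕ} (hp : p.Prime) {Q : Type*} [CommGroup Q] [Finite Q]
    (hQexp : ∀ q : Q, q ^ p = 1) {g : Q} (hg : g ≠ 1) :
    ∃ M : Subgroup Q, IsCoatom M ∧ g ∉ M := by
  haveI : Fact p.Prime := ⟨hp⟩
  letI : Module (ZMod p) (Additive Q) := auxModule p Q hQexp
  set v : Additive Q := Additive.ofMul g with hv
  have hvne : v ≠ 0 := hg
  obtain ⟨W, hW⟩ := (Submodule.span (ZMod p) {v}).exists_isCompl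
  have hvW : v ∉ W := by
    intro h
    have : v ∈ Submodule.span (ZMod p) {v} ⊓ W :=
      ⟨Submodule.mem_span_singleton_self v, h⟩
    rw [hW.inf_eq_bot] at this
    exact hvne this
  have hspan : Nat.card (Submodule.span (ZMod p) {v}) = p := by
    have hbij : Function.Bijective
        (fun k : ZMod p => (⟨k • v, Submodule.smul_mem _ k (Submodule.mem_span_singleton_self v)⟩ :
          Submodule.span (ZMod p) {v})) := by
      constructor
      · intro a b hab
        have h1 : a • v = b • v := congrArg Subtype.val hab
        by_contra hne
        have h2 : (a - b) • v = 0 := by rw [sub_smul, h1, sub_self]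
        rcases smul_eq_zero.mp h2 with h | h
        · exact hne (by linear_combination (norm := ring_nf) h)
        · exact hvne h
      · rintro ⟨w, hw⟩
        obtain ⟨k, rfl⟩ := Submodule.mem_span_singleton.mp hw
        exact ⟨k, rfl⟩
    rw [← Nat.card_eq_of_bijective _ hbij, Nat.card_zmod]
  have hcardQ : Nat.card Q = p * Nat.card W := by
    have e := Submodule.prodEquivOfIsCompl _ _ hW
    have h3 : Nat.card ((Submodule.span (ZMod p) {v}) × W) = Nat.card (Additive Q) :=
      Nat.card_eq_of_bijective e e.bijective
    rw [Nat.card_prod, hspan] at h3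
    exact h3.symm
  -- turn W into a subgroup of Q
  set M : Subgroup Q := Subgroup.toAddSubgroup.symm W.toAddSubgroup with hM
  have hmemM : ∀ q : Q, q ∈ M ↔ Additive.ofMul q ∈ W := by intro q; rfl
  have hcardM : Nat.card M = Nat.card W :=
    Nat.card_eq_of_bijective (fun x => ⟨Additive.ofMul x.1, (hmemM x.1).mp x.2⟩)
      ⟨fun a b hab => Subtype.ext (congrArg Subtype.val hab),
       fun w => ⟨⟨Additive.toMul w.1, (hmemM _).mpr (by simpa using w.2)⟩, rfl⟩⟩
  have hgM : g ∉ M := fun h => hvW ((hmemM g).mp h)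
  refine ⟨M, ⟨?_, ?_⟩, hgM⟩
  · intro h
    exact hgM (h ▸ Subgroup.mem_top g)
  · intro K hK
    have hle : Nat.card M ∣ Nat.card K := Subgroup.card_dvd_of_le hK.le
    have hKQ : Nat.card K ∣ Nat.card Q := Subgroup.card_subgroup_dvd_card K
    obtain ⟨t, ht⟩ := hle
    have hMpos : 0 < Nat.card M := Nat.card_pos
    have htp : t ∣ p := by
      have : Nat.card M * t ∣ Nat.card M * p := by
        rw [← ht, hcardQ, hcardM, mul_comm p _] at *
        exact hKQ
      exact (mul_dvd_mul_iff_left hMpos.ne').mp this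
    rcases (Nat.Prime.eq_one_or_self_of_dvd hp t htp) with h1 | h1
    · exfalso
      rw [h1, mul_one] at ht
      exact hK.ne (Subgroup.eq_of_le_of_card_ge hK.le ht.le)
    · apply Subgroup.eq_top_of_card_eq
      rw [ht, h1, hcardQ, hcardM, mul_comm]

lemma aux_frattini_le_center {p : ℕ} {P : Type*} [Group P] [Finite P]
    (hp : p.Prime)
    (habelian : ∀ x y : P, x * y * x⁻¹ * y⁻¹ ∈ Subgroup.center P)
    (hexp : ∀ x : P, x ^ p ∈ Subgroup.center P) :
    frattini P ≤ Subgroup.center P := by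
  intro g hg
  by_contra hgc
  set Z := Subgroup.center P with hZ
  letI : CommGroup (P ⧸ Z) :=
    { (inferInstance : Group (P ⧸ Z)) with
      mul_comm := by
        intro a b
        induction a using QuotientGroup.induction_on with
        | H x =>
        induction b using QuotientGroup.induction_on with
        | H y =>
        rw [← QuotientGroup.mk_mul, ← QuotientGroup.mk_mul]
        rw [QuotientGroup.eq]
        simpa [mul_assoc] using habelian y⁻¹ x⁻¹ }
  have hQexp : ∀ q : P ⧸ Z, q ^ p = 1 := by
    intro q
    induction q using QuotientGroup.induction_on with
    | H a =>
      have : ((a : P ⧸ Z)) ^ p = ((a ^ p : P) : P ⧸ Z) := by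
        rw [← QuotientGroup.mk_pow]
      rw [this, QuotientGroup.eq_one_iff]
      exact hexp a
  have hgne : (g : P ⧸ Z) ≠ 1 := by
    intro h
    exact hgc ((QuotientGroup.eq_one_iff g).mp h)
  obtain ⟨M, hM, hgM⟩ := aux_exists_coatom_avoiding hp hQexp hgne
  have hcoatom : IsCoatom (Subgroup.comap (QuotientGroup.mk' Z) M) :=
    Subgroup.isCoatom_comap_of_surjective (QuotientGroup.mk'_surjective Z) hM
  exact hgM (frattini_le_coatom hcoatom hg)

/-- Let `P` be a finite extraspecial `p`-group (its centre has order `p`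
and `P/Z(P)` is a nontrivial elementary abelian `p`-group) and let `φ` be an automorphism
of `P` of order coprime to `|P|` whose fixed-point subgroup equals the Frattini subgroup
`Φ(P)`. Then every element of `P \ Φ(P)` is conjugate in `P` to an element of the form
`[x,φ] = x⁻¹ * φ(x)`. -/
theorem conj_commutator_of_extraspecial_coprime_aut
    (p : ℕ) (hp : p.Prime) (P : Type*) [Group P] [Finite P]
    (hP : IsPGroup p P)
    (hcenter : Nat.card (Subgroup.center P) = p)
    (hnontriv : Subgroup.center P ≠ ⊤)
    (habelian : ∀ x y : P, x * y * x⁻¹ * y⁻¹ ∈ Subgroup.center P)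
    (hexp : ∀ x : P, x ^ p ∈ Subgroup.center P)
    (φ : MulAut P)
    (hcop : Nat.Coprime (orderOf φ) (Nat.card P))
    (hfix : ∀ x : P, φ x = x ↔ x ∈ frattini P) :
    ∀ g : P, g ∉ frattini P → ∃ x y : P, y⁻¹ * g * y = x⁻¹ * φ x := by
  intro g hg
  set Z := Subgroup.center P with hZdef
  -- Frattini subgroup equals the center
  have hZF : frattini P = Z := by
    apply le_antisymm (aux_frattini_le_center hp habelian hexp)
    show Z ≤ ⨅ a ∈ {H : Subgroup P | IsCoatom H}, a
    exact le_iInf fun M => le_iInf fun hM =>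
      aux_center_le_coatom hp hcenter hnontriv habelian hM
  have hfixZ : ∀ z ∈ Z, φ z = z := by
    intro z hz
    exact (hfix z).mpr (by rw [hZF]; exact hz)
  have hgZ : g ∉ Z := by rw [← hZF]; exact hg
  -- the displacement homomorphism F : P →* P ⧸ Z
  set F : P →* P ⧸ Z :=
    { toFun := fun x => ((x⁻¹ * φ x : P) : P ⧸ Z)
      map_one' := by simp
      map_mul' := by
        intro x y
        show (((x * y)⁻¹ * φ (x * y) : P) : P ⧸ Z) =
          ((x⁻¹ * φ x : P) : P ⧸ Z) * ((y⁻¹ * φ y : P) : P ⧸ Z)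
        rw [← QuotientGroup.mk_mul, map_mul φ, QuotientGroup.eq]
        have hw := habelian (x⁻¹ * φ x)⁻¹ y
        have hkey : ((x * y)⁻¹ * (φ x * φ y))⁻¹ * (x⁻¹ * φ x * (y⁻¹ * φ y)) =
            (φ y)⁻¹ * ((x⁻¹ * φ x)⁻¹ * y * (x⁻¹ * φ x)⁻¹⁻¹ * y⁻¹) * ((φ y)⁻¹)⁻¹ := by
          group
        rw [hkey]
        exact (inferInstance : (Subgroup.center P).Normal).conj_mem _ hw _ } with hFdef
  -- the kernel of F is exactly Z
  have hker : ∀ x : P, F x = 1 ↔ x ∈ Z := by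
    intro x
    constructor
    · intro hx
      have hz : x⁻¹ * φ x ∈ Z := (QuotientGroup.eq_one_iff _).mp hx
      have hφx : φ x = x * (x⁻¹ * φ x) := by group
      have hiter : ∀ k : ℕ, (φ ^ k) x = x * (x⁻¹ * φ x) ^ k := by
        intro k
        induction k with
        | zero => simp
        | succ n ih =>
          rw [pow_succ', MulAut.mul_apply, ih, map_mul, map_pow, hfixZ _ hz]
          nth_rewrite 1 [hφx]
          rw [pow_succ', mul_assoc]
      have hn := hiter (orderOf φ)
      rw [pow_orderOf_eq_one φ, MulAut.one_apply] at hn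
      have hpow1 : (x⁻¹ * φ x) ^ orderOf φ = 1 := by
        have := hn.symm
        calc (x⁻¹ * φ x) ^ orderOf φ = x⁻¹ * (x * (x⁻¹ * φ x) ^ orderOf φ) := by group
        _ = x⁻¹ * x := by rw [← hn]
        _ = 1 := by group
      have hd1 : orderOf (x⁻¹ * φ x) ∣ orderOf φ := orderOf_dvd_of_pow_eq_one hpow1
      have hd2 : orderOf (x⁻¹ * φ x) ∣ Nat.card P := by
        have := Subgroup.orderOf_dvd_natCard Z hz
        exact this.trans (by rw [hZdef]; exact Subgroup.card_subgroup_dvd_card _)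
      have : orderOf (x⁻¹ * φ x) = 1 := Nat.eq_one_of_dvd_coprimes hcop hd1 hd2
      have hone : x⁻¹ * φ x = 1 := orderOf_eq_one_iff.mp this
      have : φ x = x := by
        calc φ x = x * (x⁻¹ * φ x) := by group
        _ = x := by rw [hone, mul_one]
      rw [← hZF]
      exact (hfix x).mp this
    · intro hx
      have : φ x = x := hfixZ x hx
      show ((x⁻¹ * φ x : P) : P ⧸ Z) = 1
      rw [this, inv_mul_cancel, QuotientGroup.mk_one]
  have hkerEq : F.ker = Z := by
    ext x
    rw [MonoidHom.mem_ker]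
    exact hker x
  -- F has full range by cardinality
  have hcard : Nat.card F.range = Nat.card (P ⧸ Z) := by
    rw [← Nat.card_congr (QuotientGroup.quotientKerEquivRange F).toEquiv, hkerEq]
  have hrange : F.range = ⊤ := Subgroup.eq_top_of_card_eq _ hcard
  obtain ⟨x, hx⟩ : ∃ x, F x = (g : P ⧸ Z) := by
    have : (g : P ⧸ Z) ∈ F.range := hrange ▸ Subgroup.mem_top _
    exact this
  have hx' : ((x⁻¹ * φ x : P) : P ⧸ Z) = (g : P ⧸ Z) := hx
  have hw : (x⁻¹ * φ x)⁻¹ * g ∈ Z := QuotientGroup.eq.mp hx'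
  have hzZ : ((x⁻¹ * φ x)⁻¹ * g)⁻¹ ∈ Z := Z.inv_mem hw
  have hfxz : x⁻¹ * φ x = g * ((x⁻¹ * φ x)⁻¹ * g)⁻¹ := by group
  -- the conjugation homomorphism c : P →* P, h ↦ [g⁻¹, h⁻¹]
  set c : P →* P :=
    { toFun := fun h => g⁻¹ * h⁻¹ * g * h
      map_one' := by group
      map_mul' := by
        intro h₁ h₂
        have hswap := Subgroup.mem_center_iff.mp (habelian g⁻¹ h₁⁻¹)
        show g⁻¹ * (h₁ * h₂)⁻¹ * g * (h₁ * h₂) = _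
        calc g⁻¹ * (h₁ * h₂)⁻¹ * g * (h₁ * h₂)
            = g⁻¹ * h₂⁻¹ * g * ((g⁻¹ * h₁⁻¹ * g⁻¹⁻¹ * h₁⁻¹⁻¹) * h₂) := by group
          _ = g⁻¹ * h₂⁻¹ * g * (h₂ * (g⁻¹ * h₁⁻¹ * g⁻¹⁻¹ * h₁⁻¹⁻¹)) := by rw [hswap h₂]
          _ = (g⁻¹ * h₂⁻¹ * g * h₂) * (g⁻¹ * h₁⁻¹ * g⁻¹⁻¹ * h₁⁻¹⁻¹) := by group
          _ = (g⁻¹ * h₁⁻¹ * g⁻¹⁻¹ * h₁⁻¹⁻¹) * (g⁻¹ * h₂⁻¹ * g * h₂) :=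
              hswap _
          _ = (g⁻¹ * h₁⁻¹ * g * h₁) * (g⁻¹ * h₂⁻¹ * g * h₂) := by group } with hcdef
  have hcZ : ∀ h : P, c h ∈ Z := by
    intro h
    show g⁻¹ * h⁻¹ * g * h ∈ Z
    simpa using habelian g⁻¹ h⁻¹
  -- c is nontrivial since g is not central
  have hcne : ∃ h₀ : P, c h₀ ≠ 1 := by
    by_contra hall
    push_neg at hall
    apply hgZ
    rw [hZdef]
    apply Subgroup.mem_center_iff.mpr
    intro a
    have h1 : g⁻¹ * a⁻¹ * g * a = 1 := hall a
    have : g * a = a * g := by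
      calc g * a = a * g * (g⁻¹ * a⁻¹ * g * a) := by group
      _ = a * g := by rw [h1, mul_one]
    exact this.symm
  obtain ⟨h₀, h₀ne⟩ := hcne
  have hzpow : Z ≤ Subgroup.zpowers (c h₀) :=
    aux_center_le_zpowers hp hcenter (hcZ h₀) h₀ne
  obtain ⟨k, hk⟩ := hzpow hzZ
  -- y := h₀ ^ k conjugates g to g * z
  refine ⟨x, h₀ ^ k, ?_⟩
  have hcy : c (h₀ ^ k) = ((x⁻¹ * φ x)⁻¹ * g)⁻¹ := by
    rw [map_zpow]
    exact hk
  have hcy' : g⁻¹ * (h₀ ^ k)⁻¹ * g * (h₀ ^ k) = ((x⁻¹ * φ x)⁻¹ * g)⁻¹ := hcy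
  calc (h₀ ^ k)⁻¹ * g * (h₀ ^ k)
      = g * (g⁻¹ * (h₀ ^ k)⁻¹ * g * (h₀ ^ k)) := by group
    _ = g * ((x⁻¹ * φ x)⁻¹ * g)⁻¹ := by rw [hcy']
    _ = x⁻¹ * φ x := by group
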